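/- Let R ⊂ S^d be a reduced spherically convex body. Then Δ(R) > π/2 if and only if diam(R) > π/2. -/

import Mathlib

open scoped RealInnerProductSpace

noncomputable section

namespace SphericalGeom

/-- Euclidean space `E^n`. -/
abbrev Esp (n : ℕ) : Type := EuclideanSpace ℝ (Fin n)

/-- The unit sphere centered at the origin of `E^n` (so `S^d` for `n = d+1`). -/
def unitSphere (n : ℕ) : Set (Esp n) := Metric.sphere 0 1

/-- Spherical (geodesic) distance between points of the unit sphere. -/
def sdist {n : ℕ} (a b : Esp n) : ℝ := Real.arccos ⟪a, b⟫

/-- The hemisphere `H(c)` with center `c`: points of the sphere within spherical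
distance `π/2` from `c`. -/
def hemi {n : ℕ} (c : Esp n) : Set (Esp n) :=
  {x ∈ unitSphere n | sdist c x ≤ Real.pi / 2}

/-- The boundary great subsphere of the hemisphere centered at `c`. -/
def hemiBd {n : ℕ} (c : Esp n) : Set (Esp n) :=
  {x ∈ unitSphere n | sdist c x = Real.pi / 2}

/-- The spherical arc connecting `a` and `b` (for non-antipodal `a b` of the sphere,
this is the shorter great-circle arc joining them). -/
def arc {n : ℕ} (a b : Esp n) : Set (Esp n) :=
  {z | ∃ s t : ℝ, 0 ≤ s ∧ 0 ≤ t ∧ s • a + t • b ≠ 0 ∧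
    z = ‖s • a + t • b‖⁻¹ • (s • a + t • b)}

/-- A subset of the sphere, containing no pair of antipodes, which together with
every two of its points contains the arc connecting them. -/
def IsSphConvex {n : ℕ} (C : Set (Esp n)) : Prop :=
  C ⊆ unitSphere n ∧ (∀ x ∈ C, -x ∉ C) ∧ ∀ a ∈ C, ∀ b ∈ C, arc a b ⊆ C

/-- A spherically convex body: a closed spherically convex set with nonempty
interior relative to the sphere. -/
def IsSphConvexBody {n : ℕ} (C : Set (Esp n)) : Prop :=
  IsClosed C ∧ IsSphConvex C ∧
    ∃ x ∈ C, ∃ ε : ℝ, 0 < ε ∧ Metric.ball x ε ∩ unitSphere n ⊆ C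

/-- The hemisphere centered at `k` supports `C`: it contains `C` and its boundary
meets `C`. -/
def Supports {n : ℕ} (k : Esp n) (C : Set (Esp n)) : Prop :=
  k ∈ unitSphere n ∧ C ⊆ hemi k ∧ ∃ p ∈ C, sdist k p = Real.pi / 2

/-- The hemispheres centered at `g` and `h` are different and not opposite, so that
`H(g) ∩ H(h)` is a lune. -/
def IsLunePair {n : ℕ} (g h : Esp n) : Prop :=
  g ∈ unitSphere n ∧ h ∈ unitSphere n ∧ g ≠ h ∧ g ≠ -h

/-- The center of the bounding `(d-1)`-dimensional hemisphere `H(g)/H(h)` of the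
lune `H(g) ∩ H(h)`: the normalized projection of `h` onto the hyperplane `g^⊥`. -/
def luneFaceCenter {n : ℕ} (g h : Esp n) : Esp n :=
  ‖h - ⟪g, h⟫ • g‖⁻¹ • (h - ⟪g, h⟫ • g)

/-- The thickness of the lune `H(g) ∩ H(h)`: the spherical distance between the
centers of its two bounding hemispheres. -/
def luneThickness {n : ℕ} (g h : Esp n) : ℝ :=
  sdist (luneFaceCenter g h) (luneFaceCenter h g)

/-- The set of corners of the lune `H(g) ∩ H(h)`, i.e. `(G/H) ∩ (H/G)`. -/
def luneCorners {n : ℕ} (g h : Esp n) : Set (Esp n) := hemiBd g ∩ hemiBd h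

/-- The width of `C` determined by the supporting hemisphere `H(k)`: the minimum
thickness of a lune `H(k) ∩ K'` over all hemispheres `K' ≠ H(k)` supporting `C`. -/
def widthAt {n : ℕ} (C : Set (Esp n)) (k : Esp n) : ℝ :=
  sInf {t | ∃ k', Supports k' C ∧ k' ≠ k ∧ k' ≠ -k ∧ t = luneThickness k k'}

/-- The thickness `Δ(C)`: the minimum of `width_K(C)` over supporting hemispheres. -/
def thickness {n : ℕ} (C : Set (Esp n)) : ℝ :=
  sInf {t | ∃ k, Supports k C ∧ t = widthAt C k}

/-- The spherical diameter: the maximum spherical distance of two points of `C`. -/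
def sdiam {n : ℕ} (C : Set (Esp n)) : ℝ :=
  sSup {t | ∃ p ∈ C, ∃ q ∈ C, t = sdist p q}

/-- `C` is of constant width `w`. -/
def IsConstWidth {n : ℕ} (C : Set (Esp n)) (w : ℝ) : Prop :=
  ∀ k, Supports k C → widthAt C k = w

/-- A reduced body: every convex body properly contained in it has strictly
smaller thickness. -/
def IsReduced {n : ℕ} (R : Set (Esp n)) : Prop :=
  IsSphConvexBody R ∧ ∀ Z : Set (Esp n), IsSphConvexBody Z → Z ⊆ R → Z ≠ R →
    thickness Z < thickness R

/-- `e` is an extreme point of the convex body `C`: `C \ {e}` is convex. -/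
def IsExtremePt {n : ℕ} (C : Set (Esp n)) (e : Esp n) : Prop :=
  e ∈ C ∧ IsSphConvex (C \ {e})

/-- The boundary of `C` relative to the sphere. -/
def sphBoundary {n : ℕ} (C : Set (Esp n)) : Set (Esp n) :=
  closure C ∩ closure (unitSphere n \ C)

/-- `D` is of constant diameter `δ`: its diameter equals `δ` and every boundary
point realizes the distance `δ` to some boundary point. -/
def IsConstDiameter {n : ℕ} (D : Set (Esp n)) (δ : ℝ) : Prop :=
  sdiam D = δ ∧ ∀ p ∈ sphBoundary D, ∃ p' ∈ sphBoundary D, sdist p p' = δ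

end SphericalGeom

open SphericalGeom Real
section Auxiliary

open Real

variable {n : ℕ}

lemma SG_mem_sphere {x : Esp n} : x ∈ unitSphere n ↔ ‖x‖ = 1 := by
  simp [unitSphere, mem_sphere_zero_iff_norm]

lemma SG_sdist_def (a b : Esp n) : sdist a b = Real.arccos ⟪a, b⟫ := rfl

lemma SG_inner_le_one {x y : Esp n} (hx : ‖x‖ = 1) (hy : ‖y‖ = 1) : ⟪x, y⟫ ≤ 1 := by
  have h := abs_real_inner_le_norm x y
  rw [hx, hy, mul_one] at h
  exact (abs_le.mp h).2

lemma SG_neg_one_le_inner {x y : Esp n} (hx : ‖x‖ = 1) (hy : ‖y‖ = 1) : -1 ≤ ⟪x, y⟫ := by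
  have h := abs_real_inner_le_norm x y
  rw [hx, hy, mul_one] at h
  exact (abs_le.mp h).1

lemma SG_inner_self {x : Esp n} (hx : ‖x‖ = 1) : ⟪x, x⟫ = 1 := by
  rw [real_inner_self_eq_norm_mul_norm, hx, one_mul]

lemma SG_inner_eq_one {x y : Esp n} (hx : ‖x‖ = 1) (hy : ‖y‖ = 1) (h : ⟪x, y⟫ = 1) :
    x = y := (inner_eq_one_iff_of_norm_eq_one hx hy).mp h

lemma SG_inner_eq_neg_one {x y : Esp n} (hx : ‖x‖ = 1) (hy : ‖y‖ = 1) (h : ⟪x, y⟫ = -1) :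
    y = -x := by
  have hy' : ‖-y‖ = 1 := by rwa [norm_neg]
  have h2 : ⟪x, -y⟫ = 1 := by rw [inner_neg_right, h, neg_neg]
  have h3 := (inner_eq_one_iff_of_norm_eq_one hx hy').mp h2
  rw [h3, neg_neg]

lemma SG_mem_hemi {c x : Esp n} : x ∈ hemi c ↔ ‖x‖ = 1 ∧ 0 ≤ ⟪c, x⟫ := by
  constructor
  · rintro ⟨h1, h2⟩
    exact ⟨SG_mem_sphere.mp h1, Real.arccos_le_pi_div_two.mp h2⟩
  · rintro ⟨h1, h2⟩
    exact ⟨SG_mem_sphere.mpr h1, Real.arccos_le_pi_div_two.mpr h2⟩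

lemma SG_norm_normalize {v : Esp n} (hv : v ≠ 0) : ‖‖v‖⁻¹ • v‖ = 1 := by
  rw [norm_smul, norm_inv, norm_norm, inv_mul_cancel₀ (norm_ne_zero_iff.mpr hv)]

lemma SG_hemi_closed (c : Esp n) : IsClosed (hemi c) := by
  have he : hemi c = unitSphere n ∩ {x : Esp n | Real.arccos ⟪c, x⟫ ≤ Real.pi / 2} := rfl
  rw [he]
  exact IsClosed.inter Metric.isClosed_sphere
    (isClosed_le (Real.continuous_arccos.comp (continuous_const.inner continuous_id)) continuous_const)

lemma SG_arccos_le_arccos {x y : ℝ} (hxy : x ≤ y) : Real.arccos y ≤ Real.arccos x := by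
  rw [Real.arccos_eq_pi_div_two_sub_arcsin, Real.arccos_eq_pi_div_two_sub_arcsin]
  have := Real.monotone_arcsin hxy
  linarith

lemma SG_le_of_arccos_le {x y : ℝ} (hx0 : -1 ≤ x) (hx1 : x ≤ 1) (hy1 : -1 ≤ y) (hy2 : y ≤ 1)
    (h : Real.arccos x ≤ Real.arccos y) : y ≤ x := by
  by_contra hc
  push_neg at hc
  have h2 : Real.arccos y < Real.arccos x :=
    Real.strictAntiOn_arccos ⟨hx0, hx1⟩ ⟨hy1, hy2⟩ hc
  linarith

lemma SG_cos_le_cos {x y : ℝ} (hx0 : 0 ≤ x) (hyπ : y ≤ Real.pi) (hxy : x ≤ y) :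
    Real.cos y ≤ Real.cos x := by
  rcases eq_or_lt_of_le hxy with h | h
  · rw [h]
  · exact (Real.strictAntiOn_cos ⟨hx0, le_trans hxy hyπ⟩ ⟨le_trans hx0 hxy, hyπ⟩ h).le

lemma SG_sq_eq {a b : ℝ} (ha : 0 ≤ a) (hb : 0 ≤ b) (h : a ^ 2 = b ^ 2) : a = b := by
  have h2 : (a - b) * (a + b) = 0 := by nlinarith
  rcases mul_eq_zero.mp h2 with h3 | h3
  · linarith
  · linarith

lemma SG_proj_norm_sq {g h : Esp n} (hg : ‖g‖ = 1) (hh : ‖h‖ = 1) :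
    ‖h - ⟪g, h⟫ • g‖ ^ 2 = 1 - ⟪g, h⟫ ^ 2 := by
  have hgg := SG_inner_self hg
  have hhh := SG_inner_self hh
  have hhg : ⟪h, g⟫ = ⟪g, h⟫ := real_inner_comm g h
  have hexp : ⟪h - ⟪g, h⟫ • g, h - ⟪g, h⟫ • g⟫
      = ⟪h, h⟫ - ⟪g, h⟫ * ⟪g, h⟫ - (⟪g, h⟫ * ⟪g, h⟫ - ⟪g, h⟫ * (⟪g, h⟫ * ⟪g, g⟫)) := by
    simp only [inner_sub_left, inner_sub_right, real_inner_smul_left, real_inner_smul_right, hhg]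
  rw [← real_inner_self_eq_norm_sq, hexp, hgg, hhh]
  ring

lemma SG_proj_inner {g h : Esp n} (hg : ‖g‖ = 1) (hh : ‖h‖ = 1)
    (h1 : h ≠ g) (h2 : h ≠ -g) :
    ⟪‖h - ⟪g, h⟫ • g‖⁻¹ • (h - ⟪g, h⟫ • g), ‖g - ⟪g, h⟫ • h‖⁻¹ • (g - ⟪g, h⟫ • h)⟫
      = -⟪g, h⟫ := by
  set c : ℝ := ⟪g, h⟫ with hc
  have hgg := SG_inner_self hg
  have hhh := SG_inner_self hh
  have hhg : ⟪h, g⟫ = c := real_inner_comm g h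
  have hc1 : c < 1 := by
    rcases lt_or_eq_of_le (SG_inner_le_one hg hh) with h' | h'
    · exact h'
    · exact absurd (SG_inner_eq_one hg hh h') (by simpa [eq_comm] using h1)
  have hc2 : -1 < c := by
    rcases lt_or_eq_of_le (SG_neg_one_le_inner hg hh) with h' | h'
    · exact h'
    · exact absurd (SG_inner_eq_neg_one hg hh h'.symm) h2
  have hcsq : 0 < 1 - c ^ 2 := by nlinarith
  have hn1 : ‖h - c • g‖ ^ 2 = 1 - c ^ 2 := SG_proj_norm_sq hg hh
  have hn2 : ‖g - c • h‖ ^ 2 = 1 - c ^ 2 := by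
    have := SG_proj_norm_sq hh hg
    rwa [hhg] at this
  have hN1 : 0 < ‖h - c • g‖ := by
    have := norm_nonneg (h - c • g); nlinarith
  have hN2 : 0 < ‖g - c • h‖ := by
    have := norm_nonneg (g - c • h); nlinarith
  have hNN : ‖h - c • g‖ * ‖g - c • h‖ = 1 - c ^ 2 := by
    have hsq : (‖h - c • g‖ * ‖g - c • h‖) ^ 2 = (1 - c ^ 2) ^ 2 := by
      rw [mul_pow, hn1, hn2]; ring
    exact SG_sq_eq (by positivity) (le_of_lt hcsq) (by rw [hsq])
  have hnum : ⟪h - c • g, g - c • h⟫ = -c * (1 - c ^ 2) := by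
    simp only [inner_sub_left, inner_sub_right, real_inner_smul_left, real_inner_smul_right,
      hhg, hgg, hhh, ← hc]
    ring
  rw [real_inner_smul_left, real_inner_smul_right, hnum]
  have heq : ‖h - c • g‖⁻¹ * (‖g - c • h‖⁻¹ * (-c * (1 - c ^ 2)))
      = (-c) * ((1 - c ^ 2) / (‖h - c • g‖ * ‖g - c • h‖)) := by
    field_simp
  rw [heq, hNN, div_self (ne_of_gt hcsq), mul_one]

lemma SG_luneThickness_eq {g h : Esp n} (hg : ‖g‖ = 1) (hh : ‖h‖ = 1)
    (h1 : h ≠ g) (h2 : h ≠ -g) :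
    luneThickness g h = Real.arccos (-⟪g, h⟫) := by
  have hhg : ⟪h, g⟫ = ⟪g, h⟫ := real_inner_comm g h
  unfold luneThickness luneFaceCenter sdist
  rw [hhg]
  rw [SG_proj_inner hg hh h1 h2]

lemma SG_widthAt_nonneg (C : Set (Esp n)) (k : Esp n) : 0 ≤ widthAt C k := by
  apply Real.sInf_nonneg
  rintro t ⟨k', _, _, _, rfl⟩
  exact Real.arccos_nonneg _

lemma SG_thickness_nonneg (C : Set (Esp n)) : 0 ≤ thickness C := by
  apply Real.sInf_nonneg
  rintro t ⟨k, _, rfl⟩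
  exact SG_widthAt_nonneg C k

lemma SG_body_compact {C : Set (Esp n)} (hC : IsSphConvexBody C) : IsCompact C :=
  (isCompact_sphere (0 : Esp n) 1).of_isClosed_subset hC.1 hC.2.1.1

lemma SG_supports {C : Set (Esp n)} {u : Esp n} (hCs : C ⊆ unitSphere n) (hu : ‖u‖ = 1)
    (hpos : ∀ x ∈ C, 0 ≤ ⟪u, x⟫) {xb : Esp n} (hxb : xb ∈ C) (h0 : ⟪u, xb⟫ = 0) :
    Supports u C := by
  refine ⟨SG_mem_sphere.mpr hu,
    fun x hx => SG_mem_hemi.mpr ⟨SG_mem_sphere.mp (hCs hx), hpos x hx⟩, xb, hxb, ?_⟩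
  rw [SG_sdist_def, h0, Real.arccos_zero]

end Auxiliary
section Auxiliary2

variable {n : ℕ}

lemma SG_normalize_close {x' x₀ : Esp n} (hx₀ : ‖x₀‖ = 1) (hne : x' ≠ 0) :
    ‖‖x'‖⁻¹ • x' - x₀‖ ≤ 2 * ‖x' - x₀‖ := by
  have hpos : 0 < ‖x'‖ := norm_pos_iff.mpr hne
  have h1 : ‖‖x'‖⁻¹ • x' - x'‖ = |1 - ‖x'‖| := by
    have : ‖x'‖⁻¹ • x' - x' = (‖x'‖⁻¹ - 1) • x' := by rw [sub_smul, one_smul]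
    rw [this, norm_smul, Real.norm_eq_abs]
    rw [show |‖x'‖⁻¹ - 1| * ‖x'‖ = |(‖x'‖⁻¹ - 1) * ‖x'‖| from by
      rw [abs_mul, abs_of_pos hpos]]
    rw [show (‖x'‖⁻¹ - 1) * ‖x'‖ = 1 - ‖x'‖ from by
      rw [sub_mul, inv_mul_cancel₀ (ne_of_gt hpos)]; ring]
  have h2 : |1 - ‖x'‖| ≤ ‖x' - x₀‖ := by
    have := abs_norm_sub_norm_le x₀ x'
    rwa [hx₀, norm_sub_rev] at this
  calc ‖‖x'‖⁻¹ • x' - x₀‖ ≤ ‖‖x'‖⁻¹ • x' - x'‖ + ‖x' - x₀‖ := by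
        have := norm_sub_le_norm_sub_add_norm_sub (‖x'‖⁻¹ • x') x' x₀
        exact this
    _ ≤ 2 * ‖x' - x₀‖ := by rw [h1]; linarith

lemma SG_perturb {x₀ w : Esp n} (hx₀ : ‖x₀‖ = 1) (hw : ‖w‖ = 1) (horth : ⟪x₀, w⟫ = 0)
    {δ : ℝ} (hδ : 0 < δ) :
    ∃ y : Esp n, ‖y‖ = 1 ∧ ‖y - x₀‖ ≤ 2 * δ ∧ ⟪x₀, y⟫ < 1 ∧ 0 < ⟪w, y⟫ := by
  set u := x₀ + δ • w with hu
  have hxx := SG_inner_self hx₀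
  have hww := SG_inner_self hw
  have hN2 : ‖u‖ ^ 2 = 1 + δ ^ 2 := by
    rw [hu, norm_add_sq_real, real_inner_smul_right, horth, norm_smul, hx₀, hw,
      Real.norm_eq_abs, abs_of_pos hδ]
    ring
  have hN1 : 1 < ‖u‖ := by nlinarith [norm_nonneg u]
  have hNpos : (0:ℝ) < ‖u‖ := by linarith
  have hune : u ≠ 0 := norm_pos_iff.mp hNpos
  refine ⟨‖u‖⁻¹ • u, SG_norm_normalize hune, ?_, ?_, ?_⟩
  · have h2 : ‖u - x₀‖ = δ := by
      rw [hu]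
      simp only [add_sub_cancel_left]
      rw [norm_smul, Real.norm_eq_abs, abs_of_pos hδ, hw, mul_one]
    have h3 : ‖u‖ - 1 ≤ δ := by nlinarith
    have h4 := SG_normalize_close hx₀ hune
    rw [h2] at h4
    linarith
  · have h5 : ⟪x₀, u⟫ = 1 := by
      rw [hu, inner_add_right, real_inner_smul_right, horth, hxx]
      ring
    rw [real_inner_smul_right, h5, mul_one]
    exact inv_lt_one_of_one_lt₀ hN1
  · have h6 : ⟪w, u⟫ = δ := by
      rw [hu, inner_add_right, real_inner_smul_right, hww, real_inner_comm x₀ w, horth]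
      ring
    rw [real_inner_smul_right, h6]
    positivity

lemma SG_exists_two_points {C : Set (Esp n)} (hn : 2 ≤ n) (hC : IsSphConvexBody C) :
    ∃ x ∈ C, ∃ y ∈ C, ⟪x, y⟫ < 1 := by
  obtain ⟨x₀, hx₀, ε, hε, hball⟩ := hC.2.2
  have hx₀n : ‖x₀‖ = 1 := SG_mem_sphere.mp (hC.2.1.1 hx₀)
  have hx0ne : x₀ ≠ 0 := by
    intro h; rw [h, norm_zero] at hx₀n; norm_num at hx₀n
  obtain ⟨w, hw, hwo⟩ : ∃ w : Esp n, ‖w‖ = 1 ∧ ⟪x₀, w⟫ = 0 := by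
    have hnebot : (ℝ ∙ x₀)ᗮ ≠ ⊥ := by
      intro hbot
      have htop : (ℝ ∙ x₀) = ⊤ := Submodule.orthogonal_eq_bot_iff.mp hbot
      have h1 : Module.finrank ℝ (Esp n) = n := finrank_euclideanSpace_fin
      have h2 : Module.finrank ℝ (ℝ ∙ x₀ : Submodule ℝ (Esp n)) = 1 :=
        finrank_span_singleton hx0ne
      rw [htop, finrank_top] at h2
      omega
    obtain ⟨v, hv, hvne⟩ := Submodule.exists_mem_ne_zero_of_ne_bot hnebot
    refine ⟨‖v‖⁻¹ • v, SG_norm_normalize hvne, ?_⟩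
    rw [real_inner_smul_right,
      (Submodule.mem_orthogonal _ v).mp hv x₀ (Submodule.mem_span_singleton_self x₀), mul_zero]
  obtain ⟨y, hyn, hyd, hyx, _⟩ := SG_perturb hx₀n hw hwo (δ := ε/8) (by positivity)
  have hyC : y ∈ C := hball ⟨Metric.mem_ball.mpr (by rw [dist_eq_norm]; linarith),
    SG_mem_sphere.mpr hyn⟩
  exact ⟨x₀, hx₀, y, hyC, hyx⟩

lemma SG_interior_transport {C : Set (Esp n)} (hC : IsSphConvex C)
    {x₀ p : Esp n} (hx₀ : x₀ ∈ C) (hp : p ∈ C) {ε : ℝ} (hε : 0 < ε)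
    (hball : Metric.ball x₀ ε ∩ unitSphere n ⊆ C) :
    ∃ y : Esp n, ∃ ε' : ℝ, 0 < ε' ∧ y ∈ C ∧ 0 < ⟪p, y⟫ ∧
      Metric.ball y ε' ∩ unitSphere n ⊆ C := by
  have hx₀n : ‖x₀‖ = 1 := SG_mem_sphere.mp (hC.1 hx₀)
  have hpn : ‖p‖ = 1 := SG_mem_sphere.mp (hC.1 hp)
  set u := (2:ℝ)⁻¹ • x₀ + p with hu
  have hun : ‖u‖ ≤ 2 := by
    calc ‖u‖ ≤ ‖(2:ℝ)⁻¹ • x₀‖ + ‖p‖ := norm_add_le _ _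
      _ ≤ 2 := by
        rw [norm_smul, Real.norm_eq_abs, hx₀n, hpn,
          abs_of_pos (by norm_num : (0:ℝ) < 2⁻¹)]
        norm_num
  have hul : (1:ℝ)/2 ≤ ‖u‖ := by
    have h1 : ‖p‖ ≤ ‖u‖ + ‖(2:ℝ)⁻¹ • x₀‖ := by
      have heq : p = u - (2:ℝ)⁻¹ • x₀ := by rw [hu]; abel
      rw [heq]
      exact norm_sub_le _ _
    rw [norm_smul, Real.norm_eq_abs, hx₀n, hpn,
      abs_of_pos (by norm_num : (0:ℝ) < 2⁻¹)] at h1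
    norm_num at h1
    linarith
  have hupos : (0:ℝ) < ‖u‖ := by linarith
  have hune : u ≠ 0 := norm_pos_iff.mp hupos
  set y := ‖u‖⁻¹ • u with hy
  have hyC : y ∈ C := by
    apply hC.2.2 x₀ hx₀ p hp
    refine ⟨(2:ℝ)⁻¹, 1, by norm_num, by norm_num, ?_, ?_⟩
    · rw [one_smul]; exact hune
    · rw [one_smul]
  have hpu : (1:ℝ)/2 ≤ ⟪p, u⟫ := by
    have h2 : ⟪p, u⟫ = (2:ℝ)⁻¹ * ⟪p, x₀⟫ + 1 := by
      rw [hu, inner_add_right, real_inner_smul_right, SG_inner_self hpn]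
    have h3 : -1 ≤ ⟪p, x₀⟫ := SG_neg_one_le_inner hpn hx₀n
    rw [h2]; linarith
  have hpy : 0 < ⟪p, y⟫ := by
    rw [hy, real_inner_smul_right]
    have : 0 < ⟪p, u⟫ := by linarith
    positivity
  refine ⟨y, min ε 1 / (8 * ‖u‖), by positivity, hyC, hpy, ?_⟩
  rintro y' ⟨hy'b, hy's⟩
  have hy'n : ‖y'‖ = 1 := SG_mem_sphere.mp hy's
  have hy'd : ‖y' - y‖ < min ε 1 / (8 * ‖u‖) := by
    rw [← dist_eq_norm]; exact Metric.mem_ball.mp hy'b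
  set x' := (2:ℝ) • (‖u‖ • y' - p) with hx'
  have hx'eq : (2:ℝ)⁻¹ • x' + p = ‖u‖ • y' := by
    rw [hx', smul_smul]
    norm_num
  have hx'd : ‖x' - x₀‖ < min ε 1 / 4 := by
    have h4 : x' - x₀ = (2:ℝ) • (‖u‖ • y' - ‖u‖ • y) := by
      have h5 : ‖u‖ • y = u := by
        rw [hy, smul_smul, mul_inv_cancel₀ (ne_of_gt hupos), one_smul]
      rw [hx', h5, hu]
      module
    rw [h4, norm_smul, ← smul_sub, norm_smul]
    rw [Real.norm_eq_abs, Real.norm_eq_abs, abs_of_pos hupos]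
    have : ‖u‖ * ‖y' - y‖ < ‖u‖ * (min ε 1 / (8 * ‖u‖)) :=
      mul_lt_mul_of_pos_left hy'd hupos
    rw [show ‖u‖ * (min ε 1 / (8 * ‖u‖)) = min ε 1 / 8 from by field_simp] at this
    norm_num
    linarith
  have hmin1 : min ε 1 ≤ 1 := min_le_right _ _
  have hminε : min ε 1 ≤ ε := min_le_left _ _
  have hx'ne : x' ≠ 0 := by
    intro h
    rw [h] at hx'd
    rw [zero_sub, norm_neg, hx₀n] at hx'd
    linarith
  have hx'pos : 0 < ‖x'‖ := norm_pos_iff.mpr hx'ne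
  set x'' := ‖x'‖⁻¹ • x' with hx''
  have hx''d : ‖x'' - x₀‖ < ε := by
    have := SG_normalize_close hx₀n hx'ne
    calc ‖x'' - x₀‖ ≤ 2 * ‖x' - x₀‖ := this
      _ < 2 * (min ε 1 / 4) := by linarith
      _ ≤ ε := by linarith
  have hx''C : x'' ∈ C := hball ⟨Metric.mem_ball.mpr (by rw [dist_eq_norm]; exact hx''d),
    SG_mem_sphere.mpr (SG_norm_normalize hx'ne)⟩
  apply hC.2.2 x'' hx''C p hp
  refine ⟨(2:ℝ)⁻¹ * ‖x'‖, 1, by positivity, by norm_num, ?_, ?_⟩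
  · rw [one_smul, hx'', smul_smul]
    rw [show (2:ℝ)⁻¹ * ‖x'‖ * ‖x'‖⁻¹ = (2:ℝ)⁻¹ from by
      rw [mul_assoc, mul_inv_cancel₀ (ne_of_gt hx'pos), mul_one]]
    rw [hx'eq]
    intro hcon
    have h7 : ‖(‖u‖ • y')‖ = ‖u‖ := by
      rw [norm_smul, Real.norm_eq_abs, abs_of_pos hupos, hy'n, mul_one]
    rw [hcon, norm_zero] at h7
    linarith
  · rw [one_smul, hx'', smul_smul]
    rw [show (2:ℝ)⁻¹ * ‖x'‖ * ‖x'‖⁻¹ = (2:ℝ)⁻¹ from by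
      rw [mul_assoc, mul_inv_cancel₀ (ne_of_gt hx'pos), mul_one]]
    rw [hx'eq, norm_smul, Real.norm_eq_abs, abs_of_pos hupos, hy'n, mul_one, smul_smul,
      inv_mul_cancel₀ (ne_of_gt hupos), one_smul]

end Auxiliary2
section Auxiliary3

variable {n : ℕ}

lemma SG_touching_normal {C : Set (Esp n)} (hCs : C ⊆ unitSphere n) (hcomp : IsCompact C)
    {p v₀ : Esp n} (hp : p ∈ C) (hpn : ‖p‖ = 1) (hv₀ : ‖v₀‖ = 1)
    (hv₀p : v₀ ≠ p) (hv₀p' : v₀ ≠ -p)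
    (hv₀pos : ∀ x ∈ C, 0 ≤ ⟪v₀, x⟫) (hppos : ∀ x ∈ C, 0 ≤ ⟪p, x⟫) :
    ∃ v, Supports v C ∧ v ≠ p ∧ v ≠ -p := by
  set S := {t : ℝ | 0 ≤ t ∧ ∀ x ∈ C, t * ⟪p, x⟫ ≤ ⟪v₀, x⟫} with hS
  have h0S : (0:ℝ) ∈ S := ⟨le_refl 0, fun x hx => by
    rw [zero_mul]; exact hv₀pos x hx⟩
  have hbddS : BddAbove S := by
    refine ⟨1, fun t ht => ?_⟩
    have h1 := ht.2 p hp
    rw [SG_inner_self hpn, mul_one] at h1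
    exact le_trans h1 (SG_inner_le_one hv₀ hpn)
  set t₀ := sSup S with ht₀
  have ht₀0 : 0 ≤ t₀ := le_csSup hbddS h0S
  have hkey : ∀ x ∈ C, t₀ * ⟪p, x⟫ ≤ ⟪v₀, x⟫ := by
    intro x hx
    rcases (hppos x hx).eq_or_lt with hpx | hpx
    · rw [← hpx, mul_zero]
      exact hv₀pos x hx
    · have hub : t₀ ≤ ⟪v₀, x⟫ / ⟪p, x⟫ := by
        apply csSup_le ⟨0, h0S⟩
        intro t ht
        rw [le_div_iff₀ hpx]
        exact ht.2 x hx
      calc t₀ * ⟪p, x⟫ ≤ (⟪v₀, x⟫ / ⟪p, x⟫) * ⟪p, x⟫ :=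
            mul_le_mul_of_nonneg_right hub (le_of_lt hpx)
        _ = ⟪v₀, x⟫ := div_mul_cancel₀ _ (ne_of_gt hpx)
  have hCne : C.Nonempty := ⟨p, hp⟩
  have hcont : ContinuousOn (fun x : Esp n => ⟪v₀, x⟫ - t₀ * ⟪p, x⟫) C := by
    apply Continuous.continuousOn
    exact (continuous_const.inner continuous_id).sub
      (continuous_const.mul (continuous_const.inner continuous_id))
  obtain ⟨xb, hxbC, hminb⟩ := hcomp.exists_isMinOn hCne hcont
  have hminb' : ∀ x ∈ C, ⟪v₀, xb⟫ - t₀ * ⟪p, xb⟫ ≤ ⟪v₀, x⟫ - t₀ * ⟪p, x⟫ :=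
    fun x hx => hminb hx
  have htouch : ⟪v₀, xb⟫ - t₀ * ⟪p, xb⟫ = 0 := by
    set μ := ⟪v₀, xb⟫ - t₀ * ⟪p, xb⟫ with hμ
    have hμ0 : 0 ≤ μ := by
      have := hkey xb hxbC; rw [hμ]; linarith
    rcases hμ0.eq_or_lt with h | h
    · exact h.symm
    · exfalso
      have hmem : t₀ + μ / 2 ∈ S := by
        refine ⟨by linarith, fun x hx => ?_⟩
        have h1 := hminb' x hx
        have h2 : ⟪p, x⟫ ≤ 1 := SG_inner_le_one hpn (SG_mem_sphere.mp (hCs hx))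
        have h3 : (μ/2) * ⟪p, x⟫ ≤ μ/2 := by nlinarith
        nlinarith
      have := le_csSup hbddS hmem
      linarith
  set wv := v₀ - t₀ • p with hwv
  have hwvne : wv ≠ 0 := by
    intro h
    have hv₀eq : v₀ = t₀ • p := by
      rw [hwv] at h; rw [← sub_eq_zero]; exact h
    have : ‖v₀‖ = t₀ := by
      rw [hv₀eq, norm_smul, Real.norm_eq_abs, abs_of_nonneg ht₀0, hpn, mul_one]
    rw [hv₀] at this
    apply hv₀p
    rw [hv₀eq, ← this, one_smul]
  have hwpos : 0 < ‖wv‖ := norm_pos_iff.mpr hwvne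
  set v := ‖wv‖⁻¹ • wv with hv
  have hvinner : ∀ x : Esp n, ⟪v, x⟫ = ‖wv‖⁻¹ * (⟪v₀, x⟫ - t₀ * ⟪p, x⟫) := by
    intro x
    rw [hv, real_inner_smul_left, hwv, inner_sub_left, real_inner_smul_left]
  have hvpos : ∀ x ∈ C, 0 ≤ ⟪v, x⟫ := by
    intro x hx
    rw [hvinner]
    have := hkey x hx
    have h4 : 0 ≤ ⟪v₀, x⟫ - t₀ * ⟪p, x⟫ := by linarith
    positivity
  have hv0 : ⟪v, xb⟫ = 0 := by rw [hvinner, htouch, mul_zero]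
  refine ⟨v, SG_supports hCs (SG_norm_normalize hwvne) hvpos hxbC hv0, ?_, ?_⟩
  · intro h
    have hw1 : wv = ‖wv‖ • p := by
      rw [← h, hv, smul_smul, mul_inv_cancel₀ (ne_of_gt hwpos), one_smul]
    have hv₀eq : v₀ = (t₀ + ‖wv‖) • p := by
      rw [add_smul, ← hw1, hwv]; abel
    have h6 : ‖v₀‖ = t₀ + ‖wv‖ := by
      rw [hv₀eq, norm_smul, Real.norm_eq_abs,
        abs_of_pos (by linarith : (0:ℝ) < t₀ + ‖wv‖), hpn, mul_one]
    rw [hv₀] at h6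
    apply hv₀p
    rw [hv₀eq, ← h6, one_smul]
  · intro h
    have hw1 : wv = (-‖wv‖) • p := by
      have h9 : wv = ‖wv‖ • v := by
        rw [hv, smul_smul, mul_inv_cancel₀ (ne_of_gt hwpos), one_smul]
      calc wv = ‖wv‖ • v := h9
        _ = (-‖wv‖) • p := by rw [h, smul_neg, neg_smul]
    have hv₀eq : v₀ = (t₀ - ‖wv‖) • p := by
      rw [sub_smul, sub_eq_add_neg, ← neg_smul, ← hw1, hwv]; abel
    have h6 : |t₀ - ‖wv‖| = 1 := by
      have : ‖v₀‖ = |t₀ - ‖wv‖| := by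
        rw [hv₀eq, norm_smul, Real.norm_eq_abs, hpn, mul_one]
      rw [hv₀] at this
      exact this.symm
    rcases abs_eq (by norm_num : (0:ℝ) ≤ 1) |>.mp h6 with h7 | h7
    · exact hv₀p (by rw [hv₀eq, h7, one_smul])
    · exact hv₀p' (by rw [hv₀eq, h7, neg_one_smul])

lemma SG_decomp {C : Set (Esp n)} (hC : IsSphConvex C) {p k : Esp n} (hp : p ∈ C)
    (h : ∀ x ∈ C, 0 ≤ ⟪p, x⟫ → 0 ≤ ⟪k, x⟫) :
    ∃ b : ℝ, 0 ≤ b ∧ ∀ x ∈ C, b * ⟪p, x⟫ ≤ ⟪k, x⟫ := by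
  have hpn : ‖p‖ = 1 := SG_mem_sphere.mp (hC.1 hp)
  have hpp := SG_inner_self hpn
  -- mixing: for x with ⟪p,x⟫ < 0 and x' with ⟪p,x'⟫ > 0:
  have KEY : ∀ x ∈ C, ⟪p, x⟫ < 0 → ∀ x' ∈ C, 0 < ⟪p, x'⟫ →
      (⟪k, x⟫ / ⟪p, x⟫) * ⟪p, x'⟫ ≤ ⟪k, x'⟫ := by
    intro x hx hpx x' hx' hpx'
    set α := -⟪p, x⟫ with hα
    set β := ⟪p, x'⟫ with hβ
    have hα0 : 0 < α := by rw [hα]; linarith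
    set yv := α • x' + β • x with hyv
    have hpy : ⟪p, yv⟫ = 0 := by
      rw [hyv, inner_add_right, real_inner_smul_right, real_inner_smul_right, hα, hβ]
      ring
    have hyvne : yv ≠ 0 := by
      intro hz
      have hxx' : α • x' = β • (-x) := by
        rw [smul_neg, ← neg_smul]
        have : α • x' = -(β • x) := by
          rw [eq_neg_iff_add_eq_zero]; rw [hyv] at hz; exact hz
        rw [this, neg_smul]
      have hnorm : α = β := by
        have hxn : ‖x‖ = 1 := SG_mem_sphere.mp (hC.1 hx)
        have hx'n : ‖x'‖ = 1 := SG_mem_sphere.mp (hC.1 hx')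
        have h1 : ‖α • x'‖ = ‖β • (-x)‖ := by rw [hxx']
        rw [norm_smul, norm_smul, norm_neg x, hxn, hx'n, mul_one, mul_one,
          Real.norm_eq_abs, Real.norm_eq_abs, abs_of_pos hα0, abs_of_pos hpx'] at h1
        exact h1
      have hx'eq : x' = -x := by
        have := hxx'
        rw [hnorm] at this
        exact smul_right_injective (Esp n) (ne_of_gt hpx') this
      exact hC.2.1 x hx (hx'eq ▸ hx')
    have hyC : ‖yv‖⁻¹ • yv ∈ C := by
      apply hC.2.2 x' hx' x hx
      exact ⟨α, β, le_of_lt hα0, le_of_lt (by rw [hβ] at hpx' ⊢; exact hpx'), hyvne, rfl⟩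
    have hpyn : 0 ≤ ⟪p, ‖yv‖⁻¹ • yv⟫ := by
      rw [real_inner_smul_right, hpy, mul_zero]
    have hky := h _ hyC hpyn
    rw [real_inner_smul_right] at hky
    have hyvpos : 0 < ‖yv‖ := norm_pos_iff.mpr hyvne
    have hky2 : 0 ≤ ⟪k, yv⟫ := by
      by_contra hcon
      push_neg at hcon
      have : ‖yv‖⁻¹ * ⟪k, yv⟫ < 0 := mul_neg_of_pos_of_neg (by positivity) hcon
      linarith
    rw [hyv, inner_add_right, real_inner_smul_right, real_inner_smul_right] at hky2
    -- α ⟪k,x'⟫ + β ⟪k,x⟫ ≥ 0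
    have hpxeq : ⟪p, x⟫ = -α := by rw [hα]; ring
    rw [hpxeq, div_neg, neg_mul, div_mul_eq_mul_div, ← neg_div, div_le_iff₀ hα0]
    linarith
  set S := {r : ℝ | ∃ x, x ∈ C ∧ ⟪p, x⟫ < 0 ∧ r = ⟪k, x⟫ / ⟪p, x⟫} with hS
  have hbddS : BddAbove S := by
    refine ⟨⟪k, p⟫, ?_⟩
    rintro r ⟨x, hx, hpx, rfl⟩
    have := KEY x hx hpx p hp (by rw [hpp]; norm_num)
    rwa [hpp, mul_one] at this
  set b := max (sSup S) 0 with hb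
  refine ⟨b, le_max_right _ _, ?_⟩
  intro x hx
  rcases lt_trichotomy ⟪p, x⟫ 0 with hpx | hpx | hpx
  · have hmem : ⟪k, x⟫ / ⟪p, x⟫ ∈ S := ⟨x, hx, hpx, rfl⟩
    have h1 : ⟪k, x⟫ / ⟪p, x⟫ ≤ b := le_trans (le_csSup hbddS hmem) (le_max_left _ _)
    calc b * ⟪p, x⟫ ≤ (⟪k, x⟫ / ⟪p, x⟫) * ⟪p, x⟫ :=
          mul_le_mul_of_nonpos_right h1 (le_of_lt hpx)
      _ = ⟪k, x⟫ := div_mul_cancel₀ _ (ne_of_lt hpx)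
  · rw [hpx, mul_zero]
    exact h x hx (le_of_eq hpx.symm)
  · have hub : b ≤ ⟪k, x⟫ / ⟪p, x⟫ := by
      apply max_le
      · by_cases hSe : S.Nonempty
        · apply csSup_le hSe
          rintro r ⟨x', hx', hpx', rfl⟩
          rw [le_div_iff₀ hpx]
          exact KEY x' hx' hpx' x hx hpx
        · rw [Set.not_nonempty_iff_eq_empty] at hSe
          rw [hSe, Real.sSup_empty]
          exact div_nonneg (h x hx (le_of_lt hpx)) (le_of_lt hpx)
      · exact div_nonneg (h x hx (le_of_lt hpx)) (le_of_lt hpx)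
    calc b * ⟪p, x⟫ ≤ (⟪k, x⟫ / ⟪p, x⟫) * ⟪p, x⟫ :=
          mul_le_mul_of_nonneg_right hub (le_of_lt hpx)
      _ = ⟪k, x⟫ := div_mul_cancel₀ _ (ne_of_gt hpx)

end Auxiliary3
section Auxiliary4

variable {n : ℕ}

lemma SG_thickness_le_luneThickness {C : Set (Esp n)} {a b : Esp n}
    (hSa : Supports a C) (hSb : Supports b C) (hba : b ≠ a) (hba' : b ≠ -a) :
    thickness C ≤ luneThickness a b := by
  have h1 : thickness C ≤ widthAt C a := by
    apply csInf_le
    · exact ⟨0, by rintro t ⟨k, _, rfl⟩; exact SG_widthAt_nonneg C k⟩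
    · exact ⟨a, hSa, rfl⟩
  have h2 : widthAt C a ≤ luneThickness a b := by
    apply csInf_le
    · exact ⟨0, by rintro t ⟨k', _, _, _, rfl⟩; exact Real.arccos_nonneg _⟩
    · exact ⟨b, hSb, hba, hba', rfl⟩
  linarith

set_option maxHeartbeats 2000000 in
lemma SG_F1 {C : Set (Esp n)} (hC : IsSphConvexBody C) (hth : thickness C ≤ Real.pi / 2)
    {u u' : Esp n} (hu : ‖u‖ = 1) (hu' : ‖u'‖ = 1)
    (h1 : ∀ x ∈ C, 0 ≤ ⟪u, x⟫) (h2 : ∀ x ∈ C, 0 ≤ ⟪u', x⟫) :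
    -Real.cos (thickness C) ≤ ⟪u, u'⟫ := by
  have hcosn : 0 ≤ Real.cos (thickness C) :=
    Real.cos_nonneg_of_mem_Icc ⟨by linarith [SG_thickness_nonneg C, Real.pi_pos], hth⟩
  obtain ⟨x₀, hx₀, ε, hε, hball⟩ := hC.2.2
  have hCs : C ⊆ unitSphere n := hC.2.1.1
  set K := {w : Esp n | ‖w‖ = 1 ∧ ∀ x ∈ C, 0 ≤ ⟪w, x⟫} with hK
  have hKclosed : IsClosed K := by
    have hKeq : K = {w : Esp n | ‖w‖ = 1} ∩ ⋂ x ∈ C, {w : Esp n | 0 ≤ ⟪w, x⟫} := by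
      ext w
      simp only [hK, Set.mem_setOf_eq, Set.mem_inter_iff, Set.mem_iInter]
    rw [hKeq]
    refine IsClosed.inter (isClosed_eq continuous_norm continuous_const) ?_
    exact isClosed_biInter fun x _ =>
      isClosed_le continuous_const (continuous_id.inner continuous_const)
  have hKcomp : IsCompact K :=
    (isCompact_sphere (0 : Esp n) 1).of_isClosed_subset hKclosed
      (fun w hw => mem_sphere_zero_iff_norm.mpr hw.1)
  have hKne : K.Nonempty := ⟨u, hu, h1⟩
  have hcont : Continuous fun z : Esp n × Esp n => ⟪z.1, z.2⟫ := continuous_inner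
  obtain ⟨ab, habK, hmin⟩ :=
    (hKcomp.prod hKcomp).exists_isMinOn (hKne.prod hKne) hcont.continuousOn
  obtain ⟨a, b⟩ := ab
  have ha : a ∈ K := (Set.mem_prod.mp habK).1
  have hb : b ∈ K := (Set.mem_prod.mp habK).2
  have hM : ∀ w w' : Esp n, w ∈ K → w' ∈ K → ⟪a, b⟫ ≤ ⟪w, w'⟫ := by
    intro w w' hw hw'
    exact isMinOn_iff.mp hmin (w, w') (Set.mem_prod.mpr ⟨hw, hw'⟩)
  set M := (⟪a, b⟫ : ℝ) with hMdef
  suffices hMge : -Real.cos (thickness C) ≤ M by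
    exact le_trans hMge (hM u u' ⟨hu, h1⟩ ⟨hu', h2⟩)
  by_cases hM0 : 0 ≤ M
  · linarith
  push_neg at hM0
  by_cases hMn1 : b = -a
  · exfalso
    have hz : ∀ x ∈ C, ⟪a, x⟫ = 0 := by
      intro x hx
      have hb2 := hb.2 x hx
      rw [hMn1, inner_neg_left] at hb2
      have ha2 := ha.2 x hx
      linarith
    have hx₀n : ‖x₀‖ = 1 := SG_mem_sphere.mp (hCs hx₀)
    obtain ⟨y, hyn, hyd, _, hypos⟩ := SG_perturb hx₀n ha.1
      (by rw [real_inner_comm]; exact hz x₀ hx₀) (δ := ε/8) (by positivity)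
    have hyC : y ∈ C := hball ⟨Metric.mem_ball.mpr (by rw [dist_eq_norm]; linarith),
      SG_mem_sphere.mpr hyn⟩
    have := hz y hyC
    linarith
  have hMne1 : M ≠ -1 := fun h => hMn1 (SG_inner_eq_neg_one ha.1 hb.1 h)
  have hMgt : -1 < M :=
    lt_of_le_of_ne (SG_neg_one_le_inner ha.1 hb.1) (Ne.symm hMne1)
  have hbnea : b ≠ a := by
    intro h
    rw [hMdef, h, SG_inner_self ha.1] at hM0
    · linarith
  have hCcomp := SG_body_compact hC
  have hCne : C.Nonempty := ⟨x₀, hx₀⟩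
  have touch : ∀ w w' : Esp n, w ∈ K → w' ∈ K → ⟪w, w'⟫ = M → Supports w C := by
    intro w w' hw hw' hMw
    obtain ⟨xb, hxbC, hminw⟩ := hCcomp.exists_isMinOn hCne
      (Continuous.continuousOn (continuous_const.inner continuous_id) :
        ContinuousOn (fun x : Esp n => ⟪w, x⟫) C)
    have hminw' : ∀ x ∈ C, ⟪w, xb⟫ ≤ ⟪w, x⟫ := fun x hx => hminw hx
    set μ := (⟪w, xb⟫ : ℝ) with hμ
    have hμ0 : 0 ≤ μ := hw.2 xb hxbC
    rcases hμ0.eq_or_lt with hμz | hμz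
    · exact SG_supports hCs hw.1 hw.2 hxbC hμz.symm
    · exfalso
      set t := min (μ/2) (1/2) with htdef
      have ht0 : 0 < t := lt_min (by linarith) (by norm_num)
      have ht1 : t ≤ 1/2 := min_le_right _ _
      have htμ : t ≤ μ := le_trans (min_le_left _ _) (by linarith)
      set wv := w - t • w' with hwv
      have hwvpos : ∀ x ∈ C, 0 ≤ ⟪wv, x⟫ := by
        intro x hx
        rw [hwv, inner_sub_left, real_inner_smul_left]
        have hxn : ‖x‖ = 1 := SG_mem_sphere.mp (hCs hx)
        have h3 : ⟪w', x⟫ ≤ 1 := SG_inner_le_one hw'.1 hxn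
        have h4 := hminw' x hx
        nlinarith
      have hNle : ‖wv‖ ≤ 1 + t := by
        calc ‖wv‖ ≤ ‖w‖ + ‖t • w'‖ := norm_sub_le _ _
          _ = 1 + t := by
            rw [hw.1, norm_smul, Real.norm_eq_abs, abs_of_pos ht0, hw'.1, mul_one]
      have hNpos : 0 < ‖wv‖ := by
        have h5 : |‖w‖ - ‖t • w'‖| ≤ ‖wv‖ := abs_norm_sub_norm_le w (t • w')
        rw [hw.1, norm_smul, Real.norm_eq_abs, abs_of_pos ht0, hw'.1, mul_one] at h5
        have h6 : |1 - t| = 1 - t := abs_of_pos (by linarith)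
        rw [h6] at h5
        linarith
      have hwvne : wv ≠ 0 := norm_pos_iff.mp hNpos
      have hpair := hM (‖wv‖⁻¹ • wv) w'
        ⟨SG_norm_normalize hwvne, fun x hx => by
          rw [real_inner_smul_left]
          exact mul_nonneg (by positivity) (hwvpos x hx)⟩ hw'
      have hinner : ⟪‖wv‖⁻¹ • wv, w'⟫ = ‖wv‖⁻¹ * (M - t) := by
        rw [real_inner_smul_left, hwv, inner_sub_left, real_inner_smul_left, hMw,
          SG_inner_self hw'.1, mul_one]
      rw [hinner] at hpair
      have h7 : M * ‖wv‖ ≤ M - t := by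
        have h8 := mul_le_mul_of_nonneg_right hpair (le_of_lt hNpos)
        rwa [inv_mul_eq_div, div_mul_cancel₀ _ (ne_of_gt hNpos)] at h8
      nlinarith
  have hSa : Supports a C := touch a b ha hb rfl
  have hSb : Supports b C := touch b a hb ha (real_inner_comm a b)
  have hlune : luneThickness a b = Real.arccos (-M) :=
    SG_luneThickness_eq ha.1 hb.1 hbnea hMn1
  have h6 : thickness C ≤ Real.arccos (-M) := by
    have := SG_thickness_le_luneThickness hSa hSb hbnea hMn1
    rwa [hlune] at this
  have h7 : Real.cos (Real.arccos (-M)) ≤ Real.cos (thickness C) :=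
    SG_cos_le_cos (SG_thickness_nonneg C) (Real.arccos_le_pi _) h6
  rw [Real.cos_arccos (by linarith [SG_inner_le_one ha.1 hb.1]) (by linarith)] at h7
  linarith

set_option maxHeartbeats 2000000 in
lemma SG_core {C : Set (Esp n)} (hC : IsSphConvexBody C) (hth : thickness C ≤ Real.pi / 2)
    {p : Esp n} (hp : p ∈ C) {k k' : Esp n} (hk : ‖k‖ = 1) (hk' : ‖k'‖ = 1)
    (hkpos : ∀ x ∈ C, 0 ≤ ⟪p, x⟫ → 0 ≤ ⟪k, x⟫)
    (hk'pos : ∀ x ∈ C, 0 ≤ ⟪p, x⟫ → 0 ≤ ⟪k', x⟫)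
    (hne : k' ≠ k) (hne' : k' ≠ -k) :
    thickness C ≤ luneThickness k k' := by
  have hpn : ‖p‖ = 1 := SG_mem_sphere.mp (hC.2.1.1 hp)
  have hpp := SG_inner_self hpn
  have hcosn : 0 ≤ Real.cos (thickness C) :=
    Real.cos_nonneg_of_mem_Icc ⟨by linarith [SG_thickness_nonneg C, Real.pi_pos], hth⟩
  obtain ⟨b, hb0, hbv⟩ := SG_decomp hC.2.1 hp hkpos
  obtain ⟨b', hb'0, hb'v⟩ := SG_decomp hC.2.1 hp hk'pos
  set ν := k - b • p with hν
  set ν' := k' - b' • p with hν'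
  have hνpos : ∀ x ∈ C, 0 ≤ ⟪ν, x⟫ := by
    intro x hx
    rw [hν, inner_sub_left, real_inner_smul_left]
    have := hbv x hx
    linarith
  have hν'pos : ∀ x ∈ C, 0 ≤ ⟪ν', x⟫ := by
    intro x hx
    rw [hν', inner_sub_left, real_inner_smul_left]
    have := hb'v x hx
    linarith
  have hνp : 0 ≤ ⟪ν, p⟫ := hνpos p hp
  have hν'p : 0 ≤ ⟪ν', p⟫ := hν'pos p hp
  have hkeq : k = ν + b • p := by rw [hν]; abel
  have hk'eq : k' = ν' + b' • p := by rw [hν']; abel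
  have hνle : ‖ν‖ ≤ 1 := by
    have hsq : ‖k‖ ^ 2 = ‖ν‖ ^ 2 + 2 * (b * ⟪ν, p⟫) + b ^ 2 := by
      rw [hkeq, norm_add_sq_real, real_inner_smul_right, norm_smul, Real.norm_eq_abs, hpn,
        mul_one, sq_abs]
    rw [hk] at hsq
    nlinarith [norm_nonneg ν]
  have hν'le : ‖ν'‖ ≤ 1 := by
    have hsq : ‖k'‖ ^ 2 = ‖ν'‖ ^ 2 + 2 * (b' * ⟪ν', p⟫) + b' ^ 2 := by
      rw [hk'eq, norm_add_sq_real, real_inner_smul_right, norm_smul, Real.norm_eq_abs, hpn,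
        mul_one, sq_abs]
    rw [hk'] at hsq
    nlinarith [norm_nonneg ν']
  have hsum : ⟪k, k'⟫ = ⟪ν, ν'⟫ + b' * ⟪ν, p⟫ + b * ⟪p, ν'⟫ + b * b' := by
    rw [hkeq, hk'eq]
    simp only [inner_add_left, inner_add_right, real_inner_smul_left, real_inner_smul_right, hpp]
    ring
  have hkk : -Real.cos (thickness C) ≤ ⟪k, k'⟫ := by
    by_cases hν0 : ν = 0
    · have hb1 : b = 1 := by
        have : ‖k‖ = b := by
          rw [hkeq, hν0, zero_add, norm_smul, Real.norm_eq_abs, abs_of_nonneg hb0, hpn, mul_one]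
        rw [hk] at this
        exact this.symm
      have hkp : k = p := by rw [hkeq, hν0, hb1, zero_add, one_smul]
      have : ⟪k, k'⟫ = ⟪p, ν'⟫ + b' := by
        rw [hkp, hk'eq, inner_add_right, real_inner_smul_right, hpp, mul_one]
      rw [this]
      have hpν' : 0 ≤ ⟪p, ν'⟫ := by rw [real_inner_comm]; exact hν'p
      linarith
    by_cases hν'0 : ν' = 0
    · have hb1 : b' = 1 := by
        have : ‖k'‖ = b' := by
          rw [hk'eq, hν'0, zero_add, norm_smul, Real.norm_eq_abs, abs_of_nonneg hb'0, hpn,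
            mul_one]
        rw [hk'] at this
        exact this.symm
      have hkp : k' = p := by rw [hk'eq, hν'0, hb1, zero_add, one_smul]
      have : ⟪k, k'⟫ = ⟪ν, p⟫ + b := by
        rw [hkp, hkeq, inner_add_left, real_inner_smul_left, hpp, mul_one]
      rw [this]
      linarith
    have hνn : 0 < ‖ν‖ := norm_pos_iff.mpr hν0
    have hν'n : 0 < ‖ν'‖ := norm_pos_iff.mpr hν'0
    have hF := SG_F1 hC hth (SG_norm_normalize hν0) (SG_norm_normalize hν'0)
      (fun x hx => by
        rw [real_inner_smul_left]
        exact mul_nonneg (by positivity) (hνpos x hx))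
      (fun x hx => by
        rw [real_inner_smul_left]
        exact mul_nonneg (by positivity) (hν'pos x hx))
    have hinner2 : ⟪‖ν‖⁻¹ • ν, ‖ν'‖⁻¹ • ν'⟫ = ‖ν‖⁻¹ * (‖ν'‖⁻¹ * ⟪ν, ν'⟫) := by
      rw [real_inner_smul_left, real_inner_smul_right]
    rw [hinner2] at hF
    have h8 : (‖ν‖ * ‖ν'‖) * (-Real.cos (thickness C)) ≤ ⟪ν, ν'⟫ := by
      have h9 := mul_le_mul_of_nonneg_left hF (by positivity : (0:ℝ) ≤ ‖ν‖ * ‖ν'‖)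
      have heq : (‖ν‖ * ‖ν'‖) * (‖ν‖⁻¹ * (‖ν'‖⁻¹ * ⟪ν, ν'⟫)) = ⟪ν, ν'⟫ := by
        field_simp
      rwa [heq] at h9
    have hss : ‖ν‖ * ‖ν'‖ ≤ 1 := by nlinarith [norm_nonneg ν, norm_nonneg ν']
    have h10 : -Real.cos (thickness C) ≤ (‖ν‖ * ‖ν'‖) * (-Real.cos (thickness C)) := by
      nlinarith [hss, hcosn, mul_nonneg (norm_nonneg ν) (norm_nonneg ν')]
    have hpν' : 0 ≤ ⟪p, ν'⟫ := by rw [real_inner_comm]; exact hν'p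
    rw [hsum]
    have hbb : 0 ≤ b * b' := mul_nonneg hb0 hb'0
    have h12 : -Real.cos (thickness C) ≤ ⟪ν, ν'⟫ := le_trans h10 h8
    linarith [mul_nonneg hb'0 hνp, mul_nonneg hb0 hpν']
  rw [SG_luneThickness_eq hk hk' hne hne']
  have h11 : Real.arccos (Real.cos (thickness C)) ≤ Real.arccos (-⟪k, k'⟫) :=
    SG_arccos_le_arccos (by linarith)
  rwa [Real.arccos_cos (SG_thickness_nonneg C) (by linarith [Real.pi_pos])] at h11

end Auxiliary4
section Auxiliary5

variable {n : ℕ}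

set_option maxHeartbeats 2000000 in
lemma SG_dirA {C : Set (Esp n)} (hn : 2 ≤ n) (hC : IsSphConvexBody C)
    (hsmall : ∀ x ∈ C, ∀ y ∈ C, 0 ≤ ⟪x, y⟫) : thickness C ≤ Real.pi / 2 := by
  obtain ⟨x₁, hx₁, y₁, hy₁, hxy1⟩ := SG_exists_two_points hn hC
  have hcomp := SG_body_compact hC
  have hCs : C ⊆ unitSphere n := hC.2.1.1
  have hcont : Continuous fun z : Esp n × Esp n => Real.arccos ⟪z.1, z.2⟫ :=
    Real.continuous_arccos.comp continuous_inner
  obtain ⟨pq, hpqm, hmax⟩ := (hcomp.prod hcomp).exists_isMaxOn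
    ⟨(x₁, y₁), Set.mem_prod.mpr ⟨hx₁, hy₁⟩⟩ hcont.continuousOn
  obtain ⟨p, q⟩ := pq
  have hp : p ∈ C := (Set.mem_prod.mp hpqm).1
  have hq : q ∈ C := (Set.mem_prod.mp hpqm).2
  have hmax' : ∀ x ∈ C, ∀ y ∈ C, Real.arccos ⟪x, y⟫ ≤ Real.arccos ⟪p, q⟫ := by
    intro x hx y hy
    exact isMaxOn_iff.mp hmax (x, y) (Set.mem_prod.mpr ⟨hx, hy⟩)
  have hpn : ‖p‖ = 1 := SG_mem_sphere.mp (hCs hp)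
  have hqn : ‖q‖ = 1 := SG_mem_sphere.mp (hCs hq)
  set c := (⟪p, q⟫ : ℝ) with hc
  have hc0 : 0 ≤ c := hsmall p hp q hq
  have hc1 : c < 1 := by
    have h1 := hmax' x₁ hx₁ y₁ hy₁
    have h2 : 0 < Real.arccos ⟪x₁, y₁⟫ := Real.arccos_pos.mpr hxy1
    exact Real.arccos_pos.mp (lt_of_lt_of_le h2 h1)
  have hqp : q ≠ p := by
    intro h
    rw [hc, h, SG_inner_self hpn] at hc1
    linarith
  have hqnp : q ≠ -p := by
    intro h
    rw [hc, h, inner_neg_right, SG_inner_self hpn] at hc0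
    linarith
  have hbq : ∀ x ∈ C, c ≤ ⟪q, x⟫ := by
    intro x hx
    have hxn : ‖x‖ = 1 := SG_mem_sphere.mp (hCs hx)
    exact SG_le_of_arccos_le (SG_neg_one_le_inner hqn hxn) (SG_inner_le_one hqn hxn)
      (by linarith) (le_of_lt hc1) (hmax' q hq x hx)
  have hbp : ∀ x ∈ C, c ≤ ⟪p, x⟫ := by
    intro x hx
    have hxn : ‖x‖ = 1 := SG_mem_sphere.mp (hCs hx)
    have h3 : Real.arccos ⟪p, x⟫ ≤ Real.arccos c := hmax' p hp x hx
    exact SG_le_of_arccos_le (SG_neg_one_le_inner hpn hxn) (SG_inner_le_one hpn hxn)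
      (by linarith) (le_of_lt hc1) h3
  have hqcp : q - c • p ≠ 0 := by
    intro h
    have h4 : q = c • p := by rw [← sub_eq_zero]; exact h
    have h5 : (1:ℝ) = c * (c * 1) := by
      calc (1:ℝ) = ⟪q, q⟫ := (SG_inner_self hqn).symm
        _ = c * (c * ⟪p, p⟫) := by rw [h4, real_inner_smul_left, real_inner_smul_right]
        _ = c * (c * 1) := by rw [SG_inner_self hpn]
    nlinarith
  have hpcq : p - c • q ≠ 0 := by
    intro h
    have h4 : p = c • q := by rw [← sub_eq_zero]; exact h
    have h5 : (1:ℝ) = c * (c * 1) := by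
      calc (1:ℝ) = ⟪p, p⟫ := (SG_inner_self hpn).symm
        _ = c * (c * ⟪q, q⟫) := by rw [h4, real_inner_smul_left, real_inner_smul_right]
        _ = c * (c * 1) := by rw [SG_inner_self hqn]
    nlinarith
  set mp := ‖q - c • p‖⁻¹ • (q - c • p) with hmp
  set mq := ‖p - c • q‖⁻¹ • (p - c • q) with hmq
  have hmpn : ‖mp‖ = 1 := SG_norm_normalize hqcp
  have hmqn : ‖mq‖ = 1 := SG_norm_normalize hpcq
  have hsupp_p : Supports mp C := by
    apply SG_supports hCs hmpn ?_ hp ?_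
    · intro x hx
      rw [hmp, real_inner_smul_left, inner_sub_left, real_inner_smul_left]
      have h7 := hbq x hx
      have hxn : ‖x‖ = 1 := SG_mem_sphere.mp (hCs hx)
      have h8 : c * ⟪p, x⟫ ≤ c := by
        nlinarith [SG_inner_le_one hpn hxn]
      have h9 : (0:ℝ) ≤ ⟪q, x⟫ - c * ⟪p, x⟫ := by linarith
      positivity
    · rw [hmp, real_inner_smul_left, inner_sub_left, real_inner_smul_left,
        SG_inner_self hpn, real_inner_comm p q, ← hc, mul_one, sub_self, mul_zero]
  have hsupp_q : Supports mq C := by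
    apply SG_supports hCs hmqn ?_ hq ?_
    · intro x hx
      rw [hmq, real_inner_smul_left, inner_sub_left, real_inner_smul_left]
      have h7 := hbp x hx
      have hxn : ‖x‖ = 1 := SG_mem_sphere.mp (hCs hx)
      have h8 : c * ⟪q, x⟫ ≤ c := by
        nlinarith [SG_inner_le_one hqn hxn]
      have h9 : (0:ℝ) ≤ ⟪p, x⟫ - c * ⟪q, x⟫ := by linarith
      positivity
    · rw [hmq, real_inner_smul_left, inner_sub_left, real_inner_smul_left,
        SG_inner_self hqn, ← hc, mul_one, sub_self, mul_zero]
  have hip : ⟪mp, mq⟫ = -c := by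
    rw [hmp, hmq, hc]
    exact SG_proj_inner hpn hqn hqp hqnp
  have hmqmp : mq ≠ mp := by
    intro h
    rw [h, SG_inner_self hmpn] at hip
    linarith
  have hmqmp' : mq ≠ -mp := by
    intro h
    rw [h, inner_neg_right, SG_inner_self hmpn] at hip
    have : c = 1 := by linarith
    linarith
  have hchain := SG_thickness_le_luneThickness hsupp_p hsupp_q hmqmp hmqmp'
  have hlt : luneThickness mp mq = Real.arccos c := by
    rw [SG_luneThickness_eq hmpn hmqn hmqmp hmqmp', hip, neg_neg]
  rw [hlt] at hchain
  have : Real.arccos c ≤ Real.pi / 2 := Real.arccos_le_pi_div_two.mpr hc0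
  linarith

set_option maxHeartbeats 2000000 in
lemma SG_dirB {C : Set (Esp n)} (hR : IsReduced C) (hth : thickness C ≤ Real.pi / 2)
    {p q : Esp n} (hp : p ∈ C) (hq : q ∈ C) : 0 ≤ ⟪p, q⟫ := by
  by_contra hpq
  push_neg at hpq
  have hbody := hR.1
  have hred := hR.2
  have hclosed : IsClosed C := hbody.1
  have hconv : IsSphConvex C := hbody.2.1
  obtain ⟨x₀, hx₀, ε, hε, hball⟩ := hbody.2.2
  have hCs : C ⊆ unitSphere n := hconv.1
  have hpn : ‖p‖ = 1 := SG_mem_sphere.mp (hCs hp)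
  have hqn : ‖q‖ = 1 := SG_mem_sphere.mp (hCs hq)
  have hpp := SG_inner_self hpn
  set Z := C ∩ hemi p with hZ
  have hZs : Z ⊆ unitSphere n := fun x hx => hCs hx.1
  have hZpos : ∀ x ∈ Z, 0 ≤ ⟪p, x⟫ := fun x hx => (SG_mem_hemi.mp hx.2).2
  have hmemZ : ∀ x ∈ C, 0 ≤ ⟪p, x⟫ → x ∈ Z :=
    fun x hx hx2 => ⟨hx, SG_mem_hemi.mpr ⟨SG_mem_sphere.mp (hCs hx), hx2⟩⟩
  have hqZ : q ∉ Z := fun h => by linarith [hZpos q h]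
  -- interior point of Z
  obtain ⟨y, ε', hε', hyC, hpy, hball'⟩ := SG_interior_transport hconv hx₀ hp hε hball
  have hyZ : y ∈ Z := hmemZ y hyC (le_of_lt hpy)
  set ε'' := min ε' ⟪p, y⟫ with hε''
  have hε''0 : 0 < ε'' := lt_min hε' hpy
  have hZball : Metric.ball y ε'' ∩ unitSphere n ⊆ Z := by
    rintro w ⟨hwb, hws⟩
    have hwC : w ∈ C := hball' ⟨Metric.mem_ball.mpr
      (lt_of_lt_of_le (Metric.mem_ball.mp hwb) (min_le_left _ _)), hws⟩
    apply hmemZ w hwC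
    have h1 : |⟪p, w - y⟫| ≤ ‖w - y‖ := by
      have := abs_real_inner_le_norm p (w - y)
      rwa [hpn, one_mul] at this
    have h2 : ‖w - y‖ < ε'' := by
      rw [← dist_eq_norm]
      exact Metric.mem_ball.mp hwb
    have h3 : ⟪p, w⟫ = ⟪p, y⟫ + ⟪p, w - y⟫ := by
      rw [inner_sub_right]; ring
    have h4 : ε'' ≤ ⟪p, y⟫ := min_le_right _ _
    have h5 := abs_le.mp h1
    linarith [h5.1]
  have hZbody : IsSphConvexBody Z := by
    refine ⟨IsClosed.inter hclosed (SG_hemi_closed p), ⟨hZs, ?_, ?_⟩, y, hyZ, ε'', hε''0, hZball⟩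
    · exact fun x hx h => hconv.2.1 x hx.1 h.1
    · intro a ha b hb z hz
      obtain ⟨s, t, hs, ht, hne0, rfl⟩ := hz
      refine ⟨hconv.2.2 a ha.1 b hb.1 ⟨s, t, hs, ht, hne0, rfl⟩, ?_⟩
      apply SG_mem_hemi.mpr
      refine ⟨SG_norm_normalize hne0, ?_⟩
      rw [real_inner_smul_right, inner_add_right, real_inner_smul_right, real_inner_smul_right]
      have h6 := hZpos a ha
      have h7 := hZpos b hb
      have h8 : 0 ≤ s * ⟪p, a⟫ + t * ⟪p, b⟫ := by positivity
      positivity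
  have hZne : Z ≠ C := by
    intro h
    exact hqZ (h.symm ▸ hq)
  have hlt := hred Z hZbody Set.inter_subset_left hZne
  have hΔpos : 0 < thickness C := lt_of_le_of_lt (SG_thickness_nonneg Z) hlt
  -- touching point of p on Z
  have hcgt : -1 < ⟪p, q⟫ := by
    rcases lt_or_eq_of_le (SG_neg_one_le_inner hpn hqn) with h | h
    · exact h
    · exact absurd (SG_inner_eq_neg_one hpn hqn h.symm)
        (fun hh => hconv.2.1 p hp (hh ▸ hq))
  set wz := (-⟪p, q⟫) • p + (1:ℝ) • q with hwz
  have hwzq : ⟪q, wz⟫ = 1 - ⟪p, q⟫ ^ 2 := by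
    rw [hwz, inner_add_right, real_inner_smul_right, real_inner_smul_right,
      SG_inner_self hqn, real_inner_comm q p]
    ring
  have hwzne : wz ≠ 0 := by
    intro h
    rw [h, inner_zero_right] at hwzq
    nlinarith
  set z := ‖wz‖⁻¹ • wz with hz
  have hzC : z ∈ C :=
    hconv.2.2 p hp q hq ⟨-⟪p, q⟫, 1, by linarith, zero_le_one, hwzne, rfl⟩
  have hpz : ⟪p, z⟫ = 0 := by
    rw [hz, real_inner_smul_right, hwz, inner_add_right, real_inner_smul_right,
      real_inner_smul_right, hpp]
    ring
  have hzZ : z ∈ Z := hmemZ z hzC (le_of_eq hpz.symm)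
  have hsupp_p : Supports p Z := SG_supports hZs hpn hZpos hzZ hpz
  -- second normal of Z
  have hWne : {t | ∃ k, Supports k C ∧ t = widthAt C k}.Nonempty := by
    by_contra h
    rw [Set.not_nonempty_iff_eq_empty] at h
    have : thickness C = 0 := by rw [thickness, h, Real.sInf_empty]
    linarith
  obtain ⟨t0', k₀, hk₀, ht0'⟩ := hWne
  have hthk₀ : thickness C ≤ widthAt C k₀ := by
    apply csInf_le ⟨0, by rintro t ⟨k, _, rfl⟩; exact SG_widthAt_nonneg C k⟩
    exact ⟨k₀, hk₀, rfl⟩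
  have hTne : {t | ∃ k', Supports k' C ∧ k' ≠ k₀ ∧ k' ≠ -k₀ ∧
      t = luneThickness k₀ k'}.Nonempty := by
    by_contra h
    rw [Set.not_nonempty_iff_eq_empty] at h
    have : widthAt C k₀ = 0 := by rw [widthAt, h, Real.sInf_empty]
    linarith
  obtain ⟨t1', k₁, hk₁, hk₁ne, hk₁ne', ht1'⟩ := hTne
  have hv₀ : ∃ v₀, Supports v₀ C ∧ v₀ ≠ p ∧ v₀ ≠ -p := by
    by_cases h : k₀ = p ∨ k₀ = -p
    · refine ⟨k₁, hk₁, ?_, ?_⟩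
      · intro hh
        rcases h with h | h
        · exact hk₁ne (by rw [hh, h])
        · exact hk₁ne' (by rw [hh, h, neg_neg])
      · intro hh
        rcases h with h | h
        · exact hk₁ne' (by rw [hh, h])
        · exact hk₁ne (by rw [hh, h])
    · push_neg at h
      exact ⟨k₀, hk₀, h.1, h.2⟩
  obtain ⟨v₀, hv₀S, hv₀p, hv₀p'⟩ := hv₀
  have hpZ : p ∈ Z := hmemZ p hp (by rw [hpp]; norm_num)
  have hv₀Zpos : ∀ x ∈ Z, 0 ≤ ⟪v₀, x⟫ :=
    fun x hx => (SG_mem_hemi.mp (hv₀S.2.1 hx.1)).2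
  obtain ⟨v, hvS, hvp, hvp'⟩ := SG_touching_normal hZs (SG_body_compact hZbody) hpZ hpn
    (SG_mem_sphere.mp hv₀S.1) hv₀p hv₀p' hv₀Zpos hZpos
  -- thickness Z ≥ thickness C
  have hIV : thickness C ≤ thickness Z := by
    apply le_csInf
    · exact ⟨widthAt Z p, ⟨p, hsupp_p, rfl⟩⟩
    rintro t ⟨k, hkS, rfl⟩
    have hkn : ‖k‖ = 1 := SG_mem_sphere.mp hkS.1
    have hknp : k ≠ -p := by
      intro h
      have := (SG_mem_hemi.mp (hkS.2.1 hyZ)).2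
      rw [h, inner_neg_left] at this
      linarith
    have hkpos : ∀ x ∈ C, 0 ≤ ⟪p, x⟫ → 0 ≤ ⟪k, x⟫ :=
      fun x hx hpx => (SG_mem_hemi.mp (hkS.2.1 (hmemZ x hx hpx))).2
    apply le_csInf
    · by_cases hkp : k = p
      · exact ⟨luneThickness k v, v, hvS, by rw [hkp]; exact hvp, by rw [hkp]; exact hvp', rfl⟩
      · refine ⟨luneThickness k p, p, hsupp_p, fun h => hkp h.symm, ?_, rfl⟩
        intro h
        apply hknp
        rw [h, neg_neg]
    · rintro t ⟨k', hk'S, hk'ne, hk'ne', rfl⟩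
      have hk'n : ‖k'‖ = 1 := SG_mem_sphere.mp hk'S.1
      have hk'pos : ∀ x ∈ C, 0 ≤ ⟪p, x⟫ → 0 ≤ ⟪k', x⟫ :=
        fun x hx hpx => (SG_mem_hemi.mp (hk'S.2.1 (hmemZ x hx hpx))).2
      exact SG_core hbody hth hp hkn hk'n hkpos hk'pos hk'ne hk'ne'
  linarith

end Auxiliary5
/-- For a reduced spherically convex body `R ⊂ S^d`,
`Δ(R) > π/2 ↔ diam(R) > π/2`. -/
theorem reduced_thickness_gt_iff_sdiam_gt (d : ℕ) (hd : 2 ≤ d)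
    (R : Set (Esp (d + 1))) (hR : IsReduced R) :
    Real.pi / 2 < thickness R ↔ Real.pi / 2 < sdiam R := by
  have hbody := hR.1
  obtain ⟨x₀, hx₀, ε, hε, hball⟩ := hbody.2.2
  constructor
  · intro h
    by_contra hcon
    push_neg at hcon
    have hsmall : ∀ x ∈ R, ∀ y ∈ R, 0 ≤ ⟪x, y⟫ := by
      intro x hx y hy
      have h1 : sdist x y ≤ sdiam R := by
        apply le_csSup
        · refine ⟨Real.pi, ?_⟩
          rintro t ⟨a, ha, b, hb, rfl⟩
          exact Real.arccos_le_pi _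
        · exact ⟨x, hx, y, hy, rfl⟩
      exact Real.arccos_le_pi_div_two.mp (le_trans h1 hcon)
    have := SG_dirA (by omega : 2 ≤ d + 1) hbody hsmall
    linarith
  · intro h
    by_contra hcon
    push_neg at hcon
    have hex : ∃ x ∈ R, ∃ y ∈ R, Real.pi / 2 < sdist x y := by
      by_contra h2
      push_neg at h2
      have h3 : sdiam R ≤ Real.pi / 2 := by
        apply csSup_le
        · exact ⟨sdist x₀ x₀, ⟨x₀, hx₀, x₀, hx₀, rfl⟩⟩
        rintro t ⟨a, ha, b, hb, rfl⟩
        exact h2 a ha b hb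
      linarith
    obtain ⟨x, hx, y, hy, hxy⟩ := hex
    have hneg : ⟪x, y⟫ < 0 := by
      by_contra h3
      push_neg at h3
      have := Real.arccos_le_pi_div_two.mpr h3
      rw [SG_sdist_def] at hxy
      linarith
    have := SG_dirB hR hcon hx hy
    linarith
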